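/- In the one-dimensional shift algebra, if f((M−1/2+δ)ħ) = 0 and f((N+1/2+δ)ħ) = 0 for integers M < N, while f((n+1/2+δ)ħ) ≠ 0 for all integers M ≤ n ≤ N, then the cyclic module generated by |M⟩ (equivalently by |N⟩) under the subalgebra generated by A_+ = f(u − ħ/2)U^{-1} and A_− = f(u + ħ/2)U equals the (N − M + 1)-dimensional span of {|n⟩ : M ≤ n ≤ N}. -/

import Mathlib

open scoped BigOperators

noncomputable section

/-- The action of `A_+ = f(u − ħ/2)U⁻¹` on the module `S_ħ(1,δ)` with basis
`{|n⟩}_{n∈ℤ}`: `A_+|n⟩ = f((n+1/2+δ)ħ)|n+1⟩`. -/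
def aplus (hb δ : ℝ) (f : ℝ → ℂ) (v : ℤ →₀ ℂ) : ℤ →₀ ℂ :=
  v.sum fun n c => Finsupp.single (n + 1) (f (((n : ℝ) + 1/2 + δ) * hb) * c)

/-- The action of `A_− = f(u + ħ/2)U`: `A_−|n⟩ = f((n−1/2+δ)ħ)|n−1⟩`. -/
def aminus (hb δ : ℝ) (f : ℝ → ℂ) (v : ℤ →₀ ℂ) : ℤ →₀ ℂ :=
  v.sum fun n c => Finsupp.single (n - 1) (f (((n : ℝ) - 1/2 + δ) * hb) * c)

/-- The `A_ħ(F,f)`-submodule generated by `v`: the smallest subspace containing `v`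
and closed under `A_+` and `A_−`. -/
def genMod (hb δ : ℝ) (f : ℝ → ℂ) (v : ℤ →₀ ℂ) : Submodule ℂ (ℤ →₀ ℂ) :=
  sInf {S : Submodule ℂ (ℤ →₀ ℂ) |
    v ∈ S ∧ (∀ w ∈ S, aplus hb δ f w ∈ S) ∧ (∀ w ∈ S, aminus hb δ f w ∈ S)}

namespace Stmt18Aux

variable (hb δ : ℝ) (f : ℝ → ℂ)

lemma aplus_single (n : ℤ) (c : ℂ) :
    aplus hb δ f (Finsupp.single n c)
      = Finsupp.single (n + 1) (f (((n : ℝ) + 1/2 + δ) * hb) * c) :=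
  Finsupp.sum_single_index (by simp)

lemma aminus_single (n : ℤ) (c : ℂ) :
    aminus hb δ f (Finsupp.single n c)
      = Finsupp.single (n - 1) (f (((n : ℝ) - 1/2 + δ) * hb) * c) :=
  Finsupp.sum_single_index (by simp)

/-- `aplus` as a linear map. -/
def aplusL : (ℤ →₀ ℂ) →ₗ[ℂ] (ℤ →₀ ℂ) :=
  Finsupp.lsum ℂ fun n => f (((n : ℝ) + 1/2 + δ) * hb) • Finsupp.lsingle (n + 1)

/-- `aminus` as a linear map. -/
def aminusL : (ℤ →₀ ℂ) →ₗ[ℂ] (ℤ →₀ ℂ) :=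
  Finsupp.lsum ℂ fun n => f (((n : ℝ) - 1/2 + δ) * hb) • Finsupp.lsingle (n - 1)

lemma aplus_eq (v : ℤ →₀ ℂ) : aplus hb δ f v = aplusL hb δ f v := by
  rw [aplusL, Finsupp.lsum_apply]
  refine Finsupp.sum_congr fun n _ => ?_
  rw [LinearMap.smul_apply, Finsupp.lsingle_apply, Finsupp.smul_single']

lemma aminus_eq (v : ℤ →₀ ℂ) : aminus hb δ f v = aminusL hb δ f v := by
  rw [aminusL, Finsupp.lsum_apply]
  refine Finsupp.sum_congr fun n _ => ?_
  rw [LinearMap.smul_apply, Finsupp.lsingle_apply, Finsupp.smul_single']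

lemma mem_genMod_self (v : ℤ →₀ ℂ) : v ∈ genMod hb δ f v :=
  Submodule.mem_sInf.2 fun _ hS => hS.1

lemma genMod_aplus {v w : ℤ →₀ ℂ} (hw : w ∈ genMod hb δ f v) :
    aplus hb δ f w ∈ genMod hb δ f v :=
  Submodule.mem_sInf.2 fun S hS => hS.2.1 w (Submodule.mem_sInf.1 hw S hS)

lemma genMod_aminus {v w : ℤ →₀ ℂ} (hw : w ∈ genMod hb δ f v) :
    aminus hb δ f w ∈ genMod hb δ f v :=
  Submodule.mem_sInf.2 fun S hS => hS.2.2 w (Submodule.mem_sInf.1 hw S hS)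

lemma genMod_le {v : ℤ →₀ ℂ} {S : Submodule ℂ (ℤ →₀ ℂ)} (h1 : v ∈ S)
    (h2 : ∀ w ∈ S, aplus hb δ f w ∈ S) (h3 : ∀ w ∈ S, aminus hb δ f w ∈ S) :
    genMod hb δ f v ≤ S :=
  sInf_le ⟨h1, h2, h3⟩

end Stmt18Aux

/-- Proposition 4.3 (3): if `f((M−1/2+δ)ħ) = 0`, `f((N+1/2+δ)ħ) = 0` for integers
`M < N`, while `f((n+1/2+δ)ħ) ≠ 0` for `M ≤ n < N`, then the cyclic module generated by
`|M⟩` (equivalently by `|N⟩`) under the subalgebra generated by `A_+` and `A_−` equals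
the `(N−M+1)`-dimensional span of `{|n⟩ : M ≤ n ≤ N}`. -/
theorem stmt18 (hb δ : ℝ) (hhb : 0 < hb) (f : ℝ → ℂ) (M N : ℤ) (hMN : M < N)
    (hM : f (((M : ℝ) - 1/2 + δ) * hb) = 0)
    (hN : f (((N : ℝ) + 1/2 + δ) * hb) = 0)
    (hnz : ∀ n : ℤ, M ≤ n → n < N → f (((n : ℝ) + 1/2 + δ) * hb) ≠ 0) :
    genMod hb δ f (Finsupp.single M 1) = genMod hb δ f (Finsupp.single N 1) ∧
    genMod hb δ f (Finsupp.single M 1) =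
      Submodule.span ℂ {w : ℤ →₀ ℂ | ∃ n : ℤ, M ≤ n ∧ n ≤ N ∧ w = Finsupp.single n 1} ∧
    Module.finrank ℂ (genMod hb δ f (Finsupp.single M 1)) = (N - M + 1).toNat := by
  classical
  open Stmt18Aux in
  -- the target set of generators
  have hset : {w : ℤ →₀ ℂ | ∃ n : ℤ, M ≤ n ∧ n ≤ N ∧ w = Finsupp.single n 1}
      = (fun n : ℤ => Finsupp.single n (1 : ℂ)) '' Set.Icc M N := by
    ext w
    constructor
    · rintro ⟨n, h1, h2, rfl⟩; exact ⟨n, ⟨h1, h2⟩, rfl⟩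
    · rintro ⟨n, ⟨h1, h2⟩, rfl⟩; exact ⟨n, h1, h2, rfl⟩
  set W : Submodule ℂ (ℤ →₀ ℂ) :=
    Submodule.span ℂ {w : ℤ →₀ ℂ | ∃ n : ℤ, M ≤ n ∧ n ≤ N ∧ w = Finsupp.single n 1}
    with hW
  have hWsup : W = Finsupp.supported ℂ ℂ (Set.Icc M N) := by
    rw [hW, hset, Finsupp.supported_eq_span_single]
  -- generators are in W
  have hgen : ∀ n : ℤ, M ≤ n → n ≤ N → Finsupp.single n (1 : ℂ) ∈ W := fun n h1 h2 =>
    Submodule.subset_span ⟨n, h1, h2, rfl⟩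
  have hgen' : ∀ n : ℤ, M ≤ n → n ≤ N → ∀ c : ℂ, Finsupp.single n c ∈ W := by
    intro n h1 h2 c
    have := W.smul_mem c (hgen n h1 h2)
    rwa [Finsupp.smul_single, smul_eq_mul, mul_one] at this
  -- W is closed under aplus
  have hWplus : ∀ w ∈ W, aplus hb δ f w ∈ W := by
    intro w hw
    rw [Stmt18Aux.aplus_eq]
    have : W ≤ Submodule.comap (Stmt18Aux.aplusL hb δ f) W := by
      rw [hW, Submodule.span_le]
      rintro _ ⟨n, h1, h2, rfl⟩
      simp only [Submodule.mem_comap, SetLike.mem_coe]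
      rw [← Stmt18Aux.aplus_eq, Stmt18Aux.aplus_single]
      rcases eq_or_lt_of_le h2 with rfl | hlt
      · rw [hN]; simpa using W.zero_mem
      · exact hgen' (n + 1) (by omega) (by omega) _
    exact this hw
  -- W is closed under aminus
  have hWminus : ∀ w ∈ W, aminus hb δ f w ∈ W := by
    intro w hw
    rw [Stmt18Aux.aminus_eq]
    have : W ≤ Submodule.comap (Stmt18Aux.aminusL hb δ f) W := by
      rw [hW, Submodule.span_le]
      rintro _ ⟨n, h1, h2, rfl⟩
      simp only [Submodule.mem_comap, SetLike.mem_coe]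
      rw [← Stmt18Aux.aminus_eq, Stmt18Aux.aminus_single]
      rcases eq_or_lt_of_le h1 with rfl | hlt
      · rw [hM]; simpa using W.zero_mem
      · exact hgen' (n - 1) (by omega) (by omega) _
    exact this hw
  -- genMod (single M 1) ≤ W, genMod (single N 1) ≤ W
  have hGMle : genMod hb δ f (Finsupp.single M 1) ≤ W :=
    Stmt18Aux.genMod_le hb δ f (hgen M le_rfl hMN.le) hWplus hWminus
  have hGNle : genMod hb δ f (Finsupp.single N 1) ≤ W :=
    Stmt18Aux.genMod_le hb δ f (hgen N hMN.le le_rfl) hWplus hWminus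
  -- generators are in genMod (single M 1), by upward induction
  have hupk : ∀ k : ℕ, M + (k : ℤ) ≤ N →
      Finsupp.single (M + (k : ℤ)) (1 : ℂ) ∈ genMod hb δ f (Finsupp.single M 1) := by
    intro k
    induction k with
    | zero => intro _; simpa using Stmt18Aux.mem_genMod_self hb δ f (Finsupp.single M 1)
    | succ k ih =>
      intro hk
      have hk1 : M + ((k : ℤ) + 1) ≤ N := by push_cast at hk; omega
      have hk' : M + (k : ℤ) ≤ N := by omega
      have hlt : M + (k : ℤ) < N := by omega
      have hmem := Stmt18Aux.genMod_aplus hb δ f (ih hk')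
      rw [Stmt18Aux.aplus_single] at hmem
      set c : ℂ := f (((((M + (k : ℤ)) : ℤ) : ℝ) + 1/2 + δ) * hb) with hc
      have hcne : c ≠ 0 := by rw [hc]; exact hnz (M + k) (by omega) hlt
      have := (genMod hb δ f (Finsupp.single M 1)).smul_mem c⁻¹ hmem
      rw [Finsupp.smul_single, smul_eq_mul, mul_one, inv_mul_cancel₀ hcne] at this
      rw [show (M + ((k + 1 : ℕ) : ℤ)) = M + (k : ℤ) + 1 from by push_cast; ring]
      exact this
  have hup : ∀ n : ℤ, M ≤ n → n ≤ N →
      Finsupp.single n (1 : ℂ) ∈ genMod hb δ f (Finsupp.single M 1) := by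
    intro n h1 h2
    obtain ⟨k, rfl⟩ := Int.le.dest h1
    exact hupk k h2
  -- generators are in genMod (single N 1), by downward induction
  have hdnk : ∀ k : ℕ, M ≤ N - (k : ℤ) →
      Finsupp.single (N - (k : ℤ)) (1 : ℂ) ∈ genMod hb δ f (Finsupp.single N 1) := by
    intro k
    induction k with
    | zero => intro _; simpa using Stmt18Aux.mem_genMod_self hb δ f (Finsupp.single N 1)
    | succ k ih =>
      intro hk
      have hk1 : M ≤ N - ((k : ℤ) + 1) := by push_cast at hk; omega
      have hk' : M ≤ N - (k : ℤ) := by omega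
      have hmem := Stmt18Aux.genMod_aminus hb δ f (ih hk')
      rw [Stmt18Aux.aminus_single] at hmem
      set c : ℂ := f (((((N - (k : ℤ)) : ℤ) : ℝ) - 1/2 + δ) * hb) with hc
      have hcne : c ≠ 0 := by
        have h := hnz (N - (k : ℤ) - 1) (by omega) (by omega)
        rw [hc]
        convert h using 3
        push_cast
        ring
      have := (genMod hb δ f (Finsupp.single N 1)).smul_mem c⁻¹ hmem
      rw [Finsupp.smul_single, smul_eq_mul, mul_one, inv_mul_cancel₀ hcne] at this
      rw [show N - ((k + 1 : ℕ) : ℤ) = N - (k : ℤ) - 1 from by push_cast; ring]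
      exact this
  have hdn : ∀ n : ℤ, M ≤ n → n ≤ N →
      Finsupp.single n (1 : ℂ) ∈ genMod hb δ f (Finsupp.single N 1) := by
    intro n h1 h2
    obtain ⟨k, hkk⟩ := Int.le.dest h2
    have : n = N - (k : ℤ) := by omega
    rw [this]
    exact hdnk k (by omega)
  -- W ≤ both genMods
  have hWleM : W ≤ genMod hb δ f (Finsupp.single M 1) := by
    rw [hW, Submodule.span_le]
    rintro _ ⟨n, h1, h2, rfl⟩
    exact hup n h1 h2
  have hWleN : W ≤ genMod hb δ f (Finsupp.single N 1) := by
    rw [hW, Submodule.span_le]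
    rintro _ ⟨n, h1, h2, rfl⟩
    exact hdn n h1 h2
  have hMW : genMod hb δ f (Finsupp.single M 1) = W := le_antisymm hGMle hWleM
  have hNW : genMod hb δ f (Finsupp.single N 1) = W := le_antisymm hGNle hWleN
  refine ⟨hMW.trans hNW.symm, hMW, ?_⟩
  rw [hMW, hWsup]
  have := (Finsupp.supportedEquivFinsupp (M := ℂ) (R := ℂ) (Set.Icc M N)).finrank_eq
  rw [this, Module.finrank_finsupp_self, show Fintype.card (Set.Icc M N) = (N + 1 - M).toNat from by
    have h := Int.card_fintype_Icc_of_le (a := M) (b := N) (by omega); omega]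
  congr 1
  ring
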